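/- For all integers n ≥ 1 and 1 ≤ q ≤ n: S(n+q, q) = ∑_{p=0}^{q−1} C(n−p−1, q−p−1)·E₂(n,p), and for all integers n ≥ 1 and 0 ≤ q ≤ n−1: E₂(n,q) = ∑_{p=0}^{q} (−1)^{q−p}·C(n−p−1, q−p)·S(n+p+1, p+1), where C(a,b) denotes the binomial coefficient (equal to 0 when b > a or b < 0). -/

import Mathlib

/-- Second-order Eulerian numbers: `E₂(0,0)=1`, `E₂(n,k)=0` if `n≥1` and `k≥n`, and
`E₂(n,k)=(k+1)·E₂(n−1,k)+(2n−1−k)·E₂(n−1,k−1)` for `n≥1`. -/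
def E2 : ℕ → ℕ → ℕ
  | 0, 0 => 1
  | 0, _ + 1 => 0
  | n + 1, 0 => E2 n 0
  | n + 1, k + 1 => (k + 2) * E2 n (k + 1) + (2 * n - k) * E2 n k

/-- 2-associated Stirling subset numbers: `S(0,0)=1`, `S(n,k)=0` if `n<2k` and
`(n,k)≠(0,0)`, and `S(n,k)=k·S(n−1,k)+(n−1)·S(n−2,k−1)` for `n≥1`. -/
def S2 : ℕ → ℕ → ℕ
  | 0, 0 => 1
  | 0, _ + 1 => 0
  | 1, _ => 0
  | _ + 2, 0 => 0
  | n + 2, k + 1 => (k + 1) * S2 (n + 1) (k + 1) + (n + 1) * S2 n k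

lemma E2_succ (n k : ℕ) : E2 (n+1) (k+1) = (k+2) * E2 n (k+1) + (2*n - k) * E2 n k := rfl
lemma S2_rec (n k : ℕ) : S2 (n+2) (k+1) = (k+1) * S2 (n+1) (k+1) + (n+1) * S2 n k := rfl
lemma E2_zero0 (n : ℕ) : E2 (n+1) 0 = E2 n 0 := rfl
lemma S2_left_zero (n : ℕ) : S2 (n+1) 0 = 0 := by
  cases n with
  | zero => rfl
  | succ m => rfl

lemma E2_zero : ∀ n k : ℕ, 1 ≤ n → n ≤ k → E2 n k = 0
  | 0, _, h, _ => absurd h (by omega)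
  | _+1, 0, _, h => absurd h (by omega)
  | n+1, k+1, _, h => by
    rw [E2_succ]
    rcases Nat.eq_zero_or_pos n with rfl | hn
    · have h1 : E2 0 (k+1) = 0 := rfl
      have h2 : 2*0 - k = 0 := by omega
      rw [h1, h2]; ring
    · rw [E2_zero n (k+1) hn (by omega), E2_zero n k hn (by omega)]; ring

lemma S2_zero : ∀ n k : ℕ, n < 2 * k → S2 n k = 0
  | 0, _+1, _ => rfl
  | 1, _, _ => rfl
  | n+2, k+1, h => by
    rw [S2_rec, S2_zero (n+1) (k+1) (by omega)]
    rcases Nat.eq_zero_or_pos k with rfl | hk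
    · omega
    · rw [S2_zero n k (by omega)]; ring

lemma chooseZ (a b : ℕ) : ((b:ℤ)+1) * (a.choose (b+1)) = ((a:ℤ) - b) * (a.choose b) := by
  rcases le_or_gt b a with h | h
  · have h2 := congrArg (Nat.cast : ℕ → ℤ) (Nat.choose_succ_right_eq a b)
    push_cast [Nat.cast_sub h] at h2
    linarith
  · rw [Nat.choose_eq_zero_of_lt h, Nat.choose_eq_zero_of_lt (by omega)]
    simp

lemma alt_sum (m t : ℕ) (h : t ≤ m) :
    ∑ i ∈ Finset.range (t+1), (-1:ℤ)^(t-i) * (Nat.choose (m-i) (t-i)) * (Nat.choose m i)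
      = if t = 0 then 1 else 0 := by
  have key : ∀ i ∈ Finset.range (t+1),
      (-1:ℤ)^(t-i) * (Nat.choose (m-i) (t-i)) * (Nat.choose m i)
        = ((-1:ℤ)^t * (Nat.choose m t)) * ((-1:ℤ)^i * (Nat.choose t i)) := by
    intro i hi
    rw [Finset.mem_range] at hi
    have hit : i ≤ t := by omega
    have hpow : (-1:ℤ)^t * (-1:ℤ)^i = (-1:ℤ)^(t-i) := by
      have ht : t + i = (t - i) + 2*i := by omega
      rw [← pow_add, ht, pow_add, pow_mul, neg_one_sq, one_pow, mul_one]
    have hchZ : ((Nat.choose m t : ℤ)) * (Nat.choose t i)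
        = (Nat.choose m i : ℤ) * (Nat.choose (m-i) (t-i)) := by
      exact_mod_cast congrArg (Nat.cast : ℕ → ℤ) (Nat.choose_mul (n := m) hit)
    calc (-1:ℤ)^(t-i) * (Nat.choose (m-i) (t-i)) * (Nat.choose m i)
        = ((-1:ℤ)^t * (-1:ℤ)^i) * ((Nat.choose m i : ℤ) * (Nat.choose (m-i) (t-i))) := by
          rw [hpow]; ring
      _ = ((-1:ℤ)^t * (-1:ℤ)^i) * ((Nat.choose m t : ℤ) * (Nat.choose t i)) := by rw [hchZ]
      _ = ((-1:ℤ)^t * (Nat.choose m t)) * ((-1:ℤ)^i * (Nat.choose t i)) := by ring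
  rw [Finset.sum_congr rfl key, ← Finset.mul_sum, Int.alternating_sum_range_choose]
  rcases t with _ | t
  · simp
  · simp

lemma coeff_id (n k p : ℕ) (hpk : p < k) (hpn : p < n) :
    ((p:ℤ)+1) * ((n-p).choose (k-p)) =
      ((k:ℤ)+1) * ((n-(p+1)).choose (k-p))
        + ((n:ℤ)+k+1 - ((2*n - p : ℕ) : ℤ)) * ((n-(p+1)).choose (k-(p+1))) := by
  obtain ⟨a, ha⟩ : ∃ a, n = a + p + 1 := ⟨n - p - 1, by omega⟩
  obtain ⟨b, hb⟩ : ∃ b, k = b + p + 1 := ⟨k - p - 1, by omega⟩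
  subst ha hb
  have e1 : a + p + 1 - p = a + 1 := by omega
  have e2 : b + p + 1 - p = b + 1 := by omega
  have e3 : a + p + 1 - (p+1) = a := by omega
  have e4 : b + p + 1 - (p+1) = b := by omega
  have e5 : ((2*(a+p+1) - p : ℕ) : ℤ) = 2*(a:ℤ) + p + 2 := by
    have : 2*(a+p+1) - p = 2*a + p + 2 := by omega
    rw [this]; push_cast; ring
  rw [e1, e2, e3, e4, e5]
  have hP' : ((a+1).choose (b+1) : ℤ) = (a.choose b : ℤ) + (a.choose (b+1) : ℤ) := by
    exact_mod_cast congrArg (Nat.cast : ℕ → ℤ) (Nat.choose_succ_succ a b)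
  have hQ := chooseZ a b
  push_cast
  linear_combination ((p:ℤ)+1) * hP' - hQ
lemma key : ∀ n : ℕ, 1 ≤ n → ∀ q : ℕ,
    (S2 (n + q) q : ℤ) =
      ∑ p ∈ Finset.range q, (Nat.choose (n - p - 1) (q - p - 1) : ℤ) * (E2 n p : ℤ) := by
  intro n
  induction n with
  | zero => omega
  | succ n ih =>
    intro _ q
    rcases Nat.eq_zero_or_pos n with rfl | hn
    · -- base case n = 1
      rcases q with _ | (_ | k)
      · norm_num [show S2 1 0 = 0 from rfl]
      · norm_num [Finset.sum_range_one, show S2 2 1 = 1 from rfl,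
          show E2 1 0 = 1 from rfl]
      · rw [S2_zero (0 + 1 + (k+2)) (k+2) (by omega)]
        rw [eq_comm]
        push_cast
        refine Finset.sum_eq_zero ?_
        intro p hp
        match p with
        | 0 =>
          have h0 : (0 + 1 - 0 - 1).choose (k + 2 - 0 - 1) = 0 :=
            Nat.choose_eq_zero_of_lt (by omega)
          rw [h0]; push_cast; ring
        | (j+1) =>
          have h0 : E2 (0+1) (j+1) = 0 := E2_zero 1 (j+1) le_rfl (by omega)
          rw [h0]; push_cast; ring
    · -- inductive step, n ≥ 1
      rcases q with _ | k
      · norm_num [show n + 1 + 0 = n + 1 from rfl, S2_left_zero]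
      · have hL : n + 1 + (k+1) = n + k + 2 := by omega
        rw [hL, S2_rec]
        push_cast
        have I1 := ih hn (k+1)
        have I2 := ih hn k
        rw [show n + (k+1) = n + k + 1 from by omega] at I1
        rw [I1, I2]
        simp only [Nat.sub_sub, Nat.add_sub_add_right]
        -- now: (↑k+1) * A + (↑n+↑k+1) * B = R
        have e1 : (∑ p ∈ Finset.range (k+1),
              (Nat.choose (n - p) (k - p) : ℤ) * (E2 (n+1) p : ℤ))
            = (∑ i ∈ Finset.range k,
                (Nat.choose (n - (i+1)) (k - (i+1)) : ℤ) * (E2 (n+1) (i+1) : ℤ))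
              + (Nat.choose (n - 0) (k - 0) : ℤ) * (E2 (n+1) 0 : ℤ) :=
          Finset.sum_range_succ' _ k
        have e2 : (∑ p ∈ Finset.range (k+1),
              ((p:ℤ)+1) * (Nat.choose (n - p) (k - p) : ℤ) * (E2 n p : ℤ))
            = (∑ i ∈ Finset.range k,
                (((i+1:ℕ):ℤ)+1) * (Nat.choose (n - (i+1)) (k - (i+1)) : ℤ) * (E2 n (i+1) : ℤ))
              + (((0:ℕ):ℤ)+1) * (Nat.choose (n - 0) (k - 0) : ℤ) * (E2 n 0 : ℤ) :=
          Finset.sum_range_succ' _ k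
        have e3 : ∀ i ∈ Finset.range k,
            (Nat.choose (n - (i+1)) (k - (i+1)) : ℤ) * (E2 (n+1) (i+1) : ℤ)
              = (((i+1:ℕ):ℤ)+1) * (Nat.choose (n - (i+1)) (k - (i+1)) : ℤ) * (E2 n (i+1) : ℤ)
                + ((2*n - i : ℕ) : ℤ) * (Nat.choose (n - (i+1)) (k - (i+1)) : ℤ) * (E2 n i : ℤ) := by
          intro i _
          rw [E2_succ]
          push_cast
          ring
        have hRP : (∑ p ∈ Finset.range (k+1),
              (Nat.choose (n - p) (k - p) : ℤ) * (E2 (n+1) p : ℤ))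
            = (∑ p ∈ Finset.range (k+1),
                ((p:ℤ)+1) * (Nat.choose (n - p) (k - p) : ℤ) * (E2 n p : ℤ))
              + ∑ i ∈ Finset.range k,
                ((2*n - i : ℕ) : ℤ) * (Nat.choose (n - (i+1)) (k - (i+1)) : ℤ) * (E2 n i : ℤ) := by
          rw [e1, Finset.sum_congr rfl e3, Finset.sum_add_distrib, e2, E2_zero0]
          push_cast
          ring
        rw [hRP]
        have eP : (∑ p ∈ Finset.range (k+1),
              ((p:ℤ)+1) * (Nat.choose (n - p) (k - p) : ℤ) * (E2 n p : ℤ))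
            = (∑ p ∈ Finset.range k,
                ((p:ℤ)+1) * (Nat.choose (n - p) (k - p) : ℤ) * (E2 n p : ℤ))
              + ((k:ℤ)+1) * (Nat.choose (n - k) (k - k) : ℤ) * (E2 n k : ℤ) :=
          Finset.sum_range_succ _ k
        have eA : (∑ p ∈ Finset.range (k+1),
              (Nat.choose (n - (p+1)) (k - p) : ℤ) * (E2 n p : ℤ))
            = (∑ p ∈ Finset.range k,
                (Nat.choose (n - (p+1)) (k - p) : ℤ) * (E2 n p : ℤ))
              + (Nat.choose (n - (k+1)) (k - k) : ℤ) * (E2 n k : ℤ) :=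
          Finset.sum_range_succ _ k
        have hb1 : Nat.choose (n - (k+1)) (k - k) = 1 := by simp [Nat.sub_self]
        have hb2 : Nat.choose (n - k) (k - k) = 1 := by simp [Nat.sub_self]
        rw [eP, eA, hb1, hb2]
        have hterm : ∀ p ∈ Finset.range k,
            ((k:ℤ)+1) * ((Nat.choose (n - (p+1)) (k - p) : ℤ) * (E2 n p : ℤ))
              + ((n:ℤ)+(k:ℤ)+1) * ((Nat.choose (n - (p+1)) (k - (p+1)) : ℤ) * (E2 n p : ℤ))
            = ((p:ℤ)+1) * (Nat.choose (n - p) (k - p) : ℤ) * (E2 n p : ℤ)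
              + ((2*n - p : ℕ) : ℤ) * (Nat.choose (n - (p+1)) (k - (p+1)) : ℤ) * (E2 n p : ℤ) := by
          intro p hp
          rcases lt_or_ge p n with hpn | hpn
          · have hid := coeff_id n k p (Finset.mem_range.mp hp) hpn
            linear_combination (-((E2 n p : ℕ) : ℤ)) * hid
          · rw [E2_zero n p hn hpn]
            push_cast
            ring
        have main : ((k:ℤ)+1) * (∑ p ∈ Finset.range k,
              (Nat.choose (n - (p+1)) (k - p) : ℤ) * (E2 n p : ℤ))
            + ((n:ℤ)+(k:ℤ)+1) * (∑ p ∈ Finset.range k,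
              (Nat.choose (n - (p+1)) (k - (p+1)) : ℤ) * (E2 n p : ℤ))
            = (∑ p ∈ Finset.range k,
                ((p:ℤ)+1) * (Nat.choose (n - p) (k - p) : ℤ) * (E2 n p : ℤ))
              + ∑ p ∈ Finset.range k,
                ((2*n - p : ℕ) : ℤ) * (Nat.choose (n - (p+1)) (k - (p+1)) : ℤ) * (E2 n p : ℤ) := by
          rw [Finset.mul_sum, Finset.mul_sum, ← Finset.sum_add_distrib, ← Finset.sum_add_distrib]
          exact Finset.sum_congr rfl hterm
        linear_combination main

lemma inner_sum_aux15 (n q j : ℕ) (hj : j ≤ q) (hq : q + 1 ≤ n) :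
    ∑ p ∈ Finset.Ico j (q+1),
        (-1:ℤ)^(q-p) * (Nat.choose (n - p - 1) (q - p) : ℤ) *
          ((Nat.choose (n - j - 1) (p + 1 - j - 1) : ℤ) * (E2 n j : ℤ))
      = if j = q then (E2 n q : ℤ) else 0 := by
  rw [Finset.sum_Ico_eq_sum_range]
  rw [show q + 1 - j = (q - j) + 1 from by omega]
  have hterm : ∀ i ∈ Finset.range ((q-j)+1),
      (-1:ℤ)^(q-(j+i)) * (Nat.choose (n - (j+i) - 1) (q - (j+i)) : ℤ) *
          ((Nat.choose (n - j - 1) ((j+i) + 1 - j - 1) : ℤ) * (E2 n j : ℤ))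
        = ((-1:ℤ)^((q-j)-i) * (Nat.choose ((n-j-1) - i) ((q-j)-i) : ℤ) *
            (Nat.choose (n-j-1) i : ℤ)) * (E2 n j : ℤ) := by
    intro i hi
    rw [Finset.mem_range] at hi
    rw [show q - (j+i) = (q-j) - i from by omega,
        show n - (j+i) - 1 = (n-j-1) - i from by omega,
        show (j+i) + 1 - j - 1 = i from by omega]
    ring
  rw [Finset.sum_congr rfl hterm, ← Finset.sum_mul, alt_sum (n-j-1) (q-j) (by omega)]
  by_cases h : j = q
  · subst h; simp
  · have h2 : ¬ (q - j = 0) := by omega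
    simp [h, h2]

lemma part2 (n q : ℕ) (hn : 1 ≤ n) (hq : q ≤ n - 1) :
    (E2 n q : ℤ) = ∑ p ∈ Finset.range (q + 1),
      (-1 : ℤ) ^ (q - p) * (Nat.choose (n - p - 1) (q - p) : ℤ) *
        (S2 (n + p + 1) (p + 1) : ℤ) := by
  have hqn : q + 1 ≤ n := by omega
  have hS : ∀ p : ℕ, (S2 (n + p + 1) (p + 1) : ℤ)
      = ∑ j ∈ Finset.range (p+1),
          (Nat.choose (n - j - 1) (p + 1 - j - 1) : ℤ) * (E2 n j : ℤ) := by
    intro p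
    have h := key n hn (p+1)
    rw [show n + (p+1) = n + p + 1 from by omega] at h
    exact h
  rw [eq_comm]
  have step1 : (∑ p ∈ Finset.range (q + 1),
        (-1 : ℤ) ^ (q - p) * (Nat.choose (n - p - 1) (q - p) : ℤ) *
          (S2 (n + p + 1) (p + 1) : ℤ))
      = ∑ p ∈ Finset.range (q+1), ∑ j ∈ Finset.range (p+1),
          (-1:ℤ)^(q-p) * (Nat.choose (n - p - 1) (q - p) : ℤ) *
            ((Nat.choose (n - j - 1) (p + 1 - j - 1) : ℤ) * (E2 n j : ℤ)) := by
    refine Finset.sum_congr rfl ?_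
    intro p _
    rw [hS p, Finset.mul_sum]
  rw [step1]
  have swap := Finset.sum_Ico_Ico_comm 0 (q+1)
    (fun j p => (-1:ℤ)^(q-p) * (Nat.choose (n - p - 1) (q - p) : ℤ) *
      ((Nat.choose (n - j - 1) (p + 1 - j - 1) : ℤ) * (E2 n j : ℤ)))
  simp only [Finset.range_eq_Ico]
  rw [← swap]
  have step2 : ∀ j ∈ Finset.Ico 0 (q+1),
      (∑ p ∈ Finset.Ico j (q+1),
        (-1:ℤ)^(q-p) * (Nat.choose (n - p - 1) (q - p) : ℤ) *
          ((Nat.choose (n - j - 1) (p + 1 - j - 1) : ℤ) * (E2 n j : ℤ)))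
        = if j = q then (E2 n q : ℤ) else 0 := by
    intro j hj
    rw [Finset.mem_Ico] at hj
    exact inner_sum_aux15 n q j (by omega) hqn
  rw [Finset.sum_congr rfl step2]
  simp


/-- for `n ≥ 1`, `1 ≤ q ≤ n`:
`S(n+q, q) = ∑_{p=0}^{q−1} C(n−p−1, q−p−1)·E₂(n,p)`, and for `n ≥ 1`, `0 ≤ q ≤ n−1`:
`E₂(n,q) = ∑_{p=0}^{q} (−1)^{q−p}·C(n−p−1, q−p)·S(n+p+1, p+1)`. -/
theorem stmt_15 :
    (∀ n q : ℕ, 1 ≤ n → 1 ≤ q → q ≤ n →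
      (S2 (n + q) q : ℤ) =
        ∑ p ∈ Finset.range q, (Nat.choose (n - p - 1) (q - p - 1) : ℤ) * (E2 n p : ℤ)) ∧
    (∀ n q : ℕ, 1 ≤ n → q ≤ n - 1 →
      (E2 n q : ℤ) =
        ∑ p ∈ Finset.range (q + 1),
          (-1 : ℤ) ^ (q - p) * (Nat.choose (n - p - 1) (q - p) : ℤ) *
            (S2 (n + p + 1) (p + 1) : ℤ)) :=
  ⟨fun n q hn _ _ => key n hn q, fun n q hn hq => part2 n q hn hq⟩
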